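/- Let ℤ be the discrete group of integers. The poset of strongly connected components of the category ℤ-Set of ℤ-actions is isomorphic to the poset of lower sets of the poset Sub(ℤ) of subgroups of ℤ ordered by inclusion; moreover ℤ-Set fails the ascending chain condition, because the lower set of Sub(ℤ) generated by {pℤ : p prime} is not finitely generated. -/

import Mathlib

open CategoryTheory

universe v u v' u'

/-- Two objects are strongly connected if there are morphisms in both directions. -/
def StronglyConnected {C : Type u} [Category.{v} C] (X Y : C) : Prop :=
  Nonempty (X ⟶ Y) ∧ Nonempty (Y ⟶ X)

/-- Strong connectedness is an equivalence relation on objects. -/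
def sccSetoid (C : Type u) [Category.{v} C] : Setoid C where
  r := StronglyConnected
  iseqv := by
    refine ⟨fun X => ⟨⟨𝟙 X⟩, ⟨𝟙 X⟩⟩, fun h => ⟨h.2, h.1⟩, fun h h' => ?_⟩
    exact ⟨⟨h.1.some ≫ h'.1.some⟩, ⟨h'.2.some ≫ h.2.some⟩⟩

/-- The strongly connected components of a category. -/
def SCC (C : Type u) [Category.{v} C] : Type u := Quotient (sccSetoid C)

/-- The class of an object in the poset of strongly connected components. -/
def SCC.mk {C : Type u} [Category.{v} C] (X : C) : SCC C := Quotient.mk (sccSetoid C) X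

instance (C : Type u) [Category.{v} C] : PartialOrder (SCC C) where
  le := Quotient.lift₂ (fun X Y => Nonempty (X ⟶ Y)) (by
    rintro X Y X' Y' ⟨⟨xx'⟩, ⟨x'x⟩⟩ ⟨⟨yy'⟩, ⟨y'y⟩⟩
    exact propext ⟨fun ⟨f⟩ => ⟨x'x ≫ f ≫ yy'⟩, fun ⟨f⟩ => ⟨xx' ≫ f ≫ y'y⟩⟩)
  le_refl := by rintro ⟨X⟩; exact ⟨𝟙 X⟩
  le_trans := by rintro ⟨X⟩ ⟨Y⟩ ⟨Z⟩ ⟨f⟩ ⟨g⟩; exact ⟨f ≫ g⟩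
  le_antisymm := by rintro ⟨X⟩ ⟨Y⟩ ⟨f⟩ ⟨g⟩; exact Quotient.sound ⟨⟨f⟩, ⟨g⟩⟩

/-- The map induced on strongly connected components by a functor. -/
def sccMap {C : Type u} [Category.{v} C] {D : Type u'} [Category.{v'} D] (F : C ⥤ D) :
    SCC C → SCC D :=
  Quotient.map' F.obj (by
    rintro X Y ⟨⟨f⟩, ⟨g⟩⟩
    exact ⟨⟨F.map f⟩, ⟨F.map g⟩⟩)

/-- The category of `ℤ`-actions on sets: functors from the one-object
category on the (multiplicative) group `ℤ` to `Set`. -/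
abbrev ZSet : Type 1 := SingleObj (Multiplicative ℤ) ⥤ Type



abbrev pt : SingleObj (Multiplicative ℤ) := SingleObj.star _

def act (F : ZSet) (n : ℤ) : F.obj pt → F.obj pt := F.map (Multiplicative.ofAdd n)

theorem act_zero (F : ZSet) (x : F.obj pt) : act F 0 x = x := by
  have : act F 0 = F.map (𝟙 pt) := rfl
  rw [this, F.map_id]; rfl

theorem act_add (F : ZSet) (m n : ℤ) (x : F.obj pt) :
    act F (m + n) x = act F m (act F n x) := by
  have h2 : CategoryStruct.comp (obj := SingleObj (Multiplicative ℤ)) (X := pt) (Y := pt) (Z := pt)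
      (Multiplicative.ofAdd n) (Multiplicative.ofAdd m)
      = (Multiplicative.ofAdd (m + n)) := by
    exact (ofAdd_add m n).symm
  have h := F.map_comp (X := pt) (Y := pt) (Z := pt)
    (Multiplicative.ofAdd n) (Multiplicative.ofAdd m)
  show F.map (Multiplicative.ofAdd (m + n)) x
      = F.map (Multiplicative.ofAdd m) (F.map (Multiplicative.ofAdd n) x)
  rw [← h2]; exact types_congr_hom h x

theorem act_bij_aux (F : ZSet) (n : ℤ) (x : F.obj pt) : act F (-n) (act F n x) = x := by
  rw [← act_add, neg_add_cancel, act_zero]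

/-- The stabilizer of a point. -/
def stab (F : ZSet) (x : F.obj pt) : AddSubgroup ℤ where
  carrier := {n | act F n x = x}
  zero_mem' := act_zero F x
  add_mem' := fun {a b} ha hb => by
    show act F (a + b) x = x
    rw [act_add, hb, ha]
  neg_mem' := fun {a} ha => by
    show act F (-a) x = x
    conv_lhs => rw [← ha]
    exact act_bij_aux F a x

theorem mem_stab {F : ZSet} {x : F.obj pt} {n : ℤ} : n ∈ stab F x ↔ act F n x = x := Iff.rfl

theorem stab_act_sub {F : ZSet} {x : F.obj pt} {a b : ℤ} (h : act F a x = act F b x) :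
    a - b ∈ stab F x := by
  show act F (a - b) x = x
  rw [sub_eq_add_neg, add_comm, act_add, h]
  exact act_bij_aux F b x

/-- The lower set of subgroups attached to a `ℤ`-set. -/
def LS (F : ZSet) : LowerSet (AddSubgroup ℤ) :=
  ⟨{H | ∃ x, H ≤ stab F x}, fun _ _ hKH ⟨x, hx⟩ => ⟨x, le_trans hKH hx⟩⟩

theorem mem_LS {F : ZSet} {H : AddSubgroup ℤ} : H ∈ LS F ↔ ∃ x, H ≤ stab F x := Iff.rfl

theorem app_act {F G : ZSet} (τ : F ⟶ G) (n : ℤ) (x : F.obj pt) :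
    τ.app pt (act F n x) = act G n (τ.app pt x) :=
  types_congr_hom (τ.naturality (Multiplicative.ofAdd n)) x

theorem LS_mono {F G : ZSet} (τ : F ⟶ G) : LS F ≤ LS G := by
  rintro H ⟨x, hx⟩
  refine ⟨τ.app pt x, fun n hn => ?_⟩
  show act G n (τ.app pt x) = τ.app pt x
  rw [← app_act, hx hn]

/-- Orbit setoid. -/
def orbSetoid (F : ZSet) : Setoid (F.obj pt) where
  r x y := ∃ n, act F n x = y
  iseqv := by
    refine ⟨fun x => ⟨0, act_zero F x⟩, ?_, ?_⟩
    · rintro x y ⟨n, rfl⟩; exact ⟨-n, act_bij_aux F n x⟩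
    · rintro x y z ⟨n, rfl⟩ ⟨m, rfl⟩; exact ⟨m + n, act_add F m n x⟩

theorem hom_of_LS_le {F G : ZSet} (h : LS F ≤ LS G) : Nonempty (F ⟶ G) := by
  classical
  -- choose target points for each point of F
  have hy : ∀ x : F.obj pt, ∃ y : G.obj pt, stab F x ≤ stab G y :=
    fun x => h (mem_LS.mpr ⟨x, le_refl _⟩)
  choose y hyst using hy
  -- representative of the orbit of x
  let r : F.obj pt → F.obj pt := fun x => Quotient.out (Quotient.mk (orbSetoid F) x)
  have hr : ∀ x, ∃ n, act F n (r x) = x := fun x =>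
    Quotient.exact (Quotient.out_eq (Quotient.mk (orbSetoid F) x))
  choose n hn using hr
  have hrr : ∀ (m : ℤ) (x : F.obj pt), r (act F m x) = r x := by
    intro m x
    show Quotient.out _ = Quotient.out _
    congr 1
    exact Quotient.sound (⟨-m, act_bij_aux F m x⟩ : (orbSetoid F).r (act F m x) x)
  -- the equivariant map
  let τf : F.obj pt → G.obj pt := fun x => act G (n x) (y (r x))
  have keyτ : ∀ (m : ℤ) (x : F.obj pt), τf (act F m x) = act G m (τf x) := by
    intro m x
    show act G (n (act F m x)) (y (r (act F m x))) = act G m (act G (n x) (y (r x)))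
    rw [hrr m x, ← act_add]
    -- difference lies in stab of the representative
    have hst : n (act F m x) - (m + n x) ∈ stab F (r x) := by
      apply stab_act_sub
      rw [act_add, hn x, ← hrr m x, hn (act F m x)]
    have : act G (n (act F m x) - (m + n x)) (y (r x)) = y (r x) := hyst (r x) hst
    calc act G (n (act F m x)) (y (r x))
        = act G ((m + n x) + (n (act F m x) - (m + n x))) (y (r x)) := by ring_nf
      _ = act G (m + n x) (act G (n (act F m x) - (m + n x)) (y (r x))) := act_add _ _ _ _
      _ = act G (m + n x) (y (r x)) := by rw [this]
  refine ⟨⟨fun _ => TypeCat.ofHom τf, ?_⟩⟩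
  intro _ _ f
  ext x
  exact keyτ (Multiplicative.toAdd f) x

theorem hom_iff_LS_le {F G : ZSet} : Nonempty (F ⟶ G) ↔ LS F ≤ LS G :=
  ⟨fun ⟨τ⟩ => LS_mono τ, hom_of_LS_le⟩

/-- The `ℤ`-set built from a lower set of subgroups: disjoint union of `ℤ ⧸ H`. -/
def FS (S : LowerSet (AddSubgroup ℤ)) : ZSet where
  obj _ := Σ H : {H : AddSubgroup ℤ // H ∈ S}, ℤ ⧸ H.val
  map {X Y} f := TypeCat.ofHom fun x => ⟨x.1, ((Multiplicative.toAdd (α := ℤ) f : ℤ) : ℤ ⧸ x.1.val) + x.2⟩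
  map_id X := by
    refine ConcreteCategory.hom_ext _ _ fun x => ?_
    change (⟨x.1, _⟩ : Σ H : {H : AddSubgroup ℤ // H ∈ S}, ℤ ⧸ H.val) = ⟨x.1, _⟩
    exact congrArg (Sigma.mk x.1) (by
      show (((0 : ℤ) : ℤ ⧸ x.1.val)) + x.2 = x.2
      rw [QuotientAddGroup.mk_zero, zero_add])
  map_comp {X Y Z} f g := by
    refine ConcreteCategory.hom_ext _ _ fun x => ?_
    change (⟨x.1, _⟩ : Σ H : {H : AddSubgroup ℤ // H ∈ S}, ℤ ⧸ H.val) = ⟨x.1, _⟩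
    exact congrArg (Sigma.mk x.1) (by
      show (((Multiplicative.toAdd (α := ℤ) g + Multiplicative.toAdd (α := ℤ) f : ℤ)
          : ℤ ⧸ x.1.val)) + x.2
        = ((Multiplicative.toAdd (α := ℤ) g : ℤ) : ℤ ⧸ x.1.val)
          + (((Multiplicative.toAdd (α := ℤ) f : ℤ) : ℤ ⧸ x.1.val) + x.2)
      rw [QuotientAddGroup.mk_add, add_assoc])

theorem act_FS (S : LowerSet (AddSubgroup ℤ)) (n : ℤ)
    (x : (FS S).obj pt) : act (FS S) n x = ⟨x.1, (n : ℤ ⧸ x.1.val) + x.2⟩ := rfl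

theorem stab_FS (S : LowerSet (AddSubgroup ℤ)) (H : {H : AddSubgroup ℤ // H ∈ S})
    (q : ℤ ⧸ H.val) : stab (FS S) ⟨H, q⟩ = H.val := by
  ext n
  change act (FS S) n ⟨H, q⟩ = ⟨H, q⟩ ↔ _
  show (⟨H, (n : ℤ ⧸ H.val) + q⟩ : Σ H : {H : AddSubgroup ℤ // H ∈ S}, ℤ ⧸ H.val) = ⟨H, q⟩ ↔ _
  simp only [Sigma.mk.inj_iff, heq_eq_eq, true_and]
  rw [add_eq_right, QuotientAddGroup.eq_zero_iff]

theorem LS_FS (S : LowerSet (AddSubgroup ℤ)) : LS (FS S) = S := by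
  ext K
  constructor
  · rintro ⟨x, hx⟩
    obtain ⟨H, q⟩ := x
    rw [stab_FS] at hx
    exact S.lower hx H.property
  · intro hK
    exact ⟨⟨⟨K, hK⟩, (0 : ℤ ⧸ K)⟩, by rw [stab_FS]⟩


theorem LS_respects : ∀ (F G : ZSet), (sccSetoid ZSet).r F G → LS F = LS G :=
  fun _ _ h => le_antisymm (hom_iff_LS_le.mp h.1) (hom_iff_LS_le.mp h.2)

/-- The induced map on strongly connected components. -/
def L2 : SCC ZSet → LowerSet (AddSubgroup ℤ) := Quotient.lift LS LS_respects

theorem scc_le_iff (F G : ZSet) : SCC.mk F ≤ SCC.mk G ↔ Nonempty (F ⟶ G) := Iff.rfl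

/-- The order isomorphism between the SCC poset of `ℤ`-`Set` and lower sets of subgroups. -/
noncomputable def theIso : SCC ZSet ≃o LowerSet (AddSubgroup ℤ) where
  toFun := L2
  invFun S := SCC.mk (FS S)
  left_inv := by
    rintro ⟨F⟩
    apply Quotient.sound
    have h : LS (FS (LS F)) = LS F := LS_FS (LS F)
    exact ⟨hom_of_LS_le h.le, hom_of_LS_le h.ge⟩
  right_inv S := LS_FS S
  map_rel_iff' := by
    rintro ⟨F⟩ ⟨G⟩
    exact hom_iff_LS_le.symm

theorem zmul_le_zmul {a b : ℤ} :
    AddSubgroup.zmultiples a ≤ AddSubgroup.zmultiples b ↔ b ∣ a := by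
  rw [AddSubgroup.zmultiples_le, Int.mem_zmultiples_iff]

theorem zmul_prime_le {p q : ℕ} (hp : p.Prime) (hq : q.Prime)
    (h : AddSubgroup.zmultiples (p : ℤ) ≤ AddSubgroup.zmultiples (q : ℤ)) : q = p := by
  rw [zmul_le_zmul, Int.natCast_dvd_natCast] at h
  exact ((Nat.prime_dvd_prime_iff_eq hq hp).mp h)

/-- A strictly increasing chain of lower sets of subgroups. -/
def chain (n : ℕ) : LowerSet (AddSubgroup ℤ) :=
  lowerClosure ((fun k => AddSubgroup.zmultiples ((Nat.nth Nat.Prime k : ℕ) : ℤ)) '' Set.Iio n)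

theorem chain_strictMono : StrictMono chain := by
  apply strictMono_nat_of_lt_succ
  intro n
  constructor
  · exact lowerClosure_mono (Set.image_mono (fun k hk => lt_trans hk (Nat.lt_succ_self n)))
  · intro hle
    have hmem : AddSubgroup.zmultiples ((Nat.nth Nat.Prime n : ℕ) : ℤ) ∈ chain (n + 1) :=
      subset_lowerClosure ⟨n, Nat.lt_succ_self n, rfl⟩
    have h3 : ∃ b ∈ (fun k => AddSubgroup.zmultiples ((Nat.nth Nat.Prime k : ℕ) : ℤ)) '' Set.Iio n,
        AddSubgroup.zmultiples ((Nat.nth Nat.Prime n : ℕ) : ℤ) ≤ b := hle hmem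
    obtain ⟨H, ⟨k, hk, rfl⟩, hH⟩ := h3
    have heq := zmul_prime_le (Nat.prime_nth_prime n) (Nat.prime_nth_prime k) hH
    have h4 : k = n := (Nat.nth_strictMono Nat.infinite_setOf_prime).injective heq
    have h5 : k < n := hk
    omega

theorem primes_zmul_injOn : Set.InjOn (fun p : ℕ => AddSubgroup.zmultiples ((p : ℕ) : ℤ))
    {p | p.Prime} := by
  intro p hp q hq h
  have h1 := zmul_prime_le hp hq h.le
  omega

/-- The poset of strongly connected components of `ℤ`-`Set` is isomorphic to
the poset of lower sets of the poset of subgroups of `ℤ`; moreover `ℤ`-`Set`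
fails the ascending chain condition, because the lower set generated by
`{pℤ : p prime}` is not finitely generated. -/
theorem scc_zSet :
    Nonempty (SCC ZSet ≃o LowerSet (AddSubgroup ℤ)) ∧
    (∃ f : ℕ → SCC ZSet, StrictMono f) ∧
    ¬ ∃ s : Finset (AddSubgroup ℤ),
        lowerClosure (s : Set (AddSubgroup ℤ)) =
          lowerClosure {H : AddSubgroup ℤ |
            ∃ p : ℕ, p.Prime ∧ H = AddSubgroup.zmultiples (p : ℤ)} := by
  refine ⟨⟨theIso⟩, ⟨fun n => theIso.symm (chain n),
    fun _ _ h => theIso.symm.strictMono (chain_strictMono h)⟩, ?_⟩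
  rintro ⟨s, hs⟩
  set P : Set (AddSubgroup ℤ) :=
    {H : AddSubgroup ℤ | ∃ p : ℕ, p.Prime ∧ H = AddSubgroup.zmultiples (p : ℤ)} with hP
  have hsub : P ⊆ (s : Set (AddSubgroup ℤ)) := by
    rintro _ ⟨p, hp, rfl⟩
    have h1 : AddSubgroup.zmultiples (p : ℤ) ∈ lowerClosure P :=
      subset_lowerClosure ⟨p, hp, rfl⟩
    rw [← hs, mem_lowerClosure] at h1
    obtain ⟨H, hHs, hle⟩ := h1
    have h2 : H ∈ lowerClosure P := by
      rw [← hs]; exact subset_lowerClosure hHs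
    rw [mem_lowerClosure] at h2
    obtain ⟨_, ⟨q, hq, rfl⟩, hle2⟩ := h2
    have : q = p := by
      have hd : (q : ℤ) ∣ (p : ℤ) := by
        rw [← Int.mem_zmultiples_iff]
        exact hle2 (hle (AddSubgroup.mem_zmultiples _))
      rw [Int.natCast_dvd_natCast] at hd
      exact (Nat.prime_dvd_prime_iff_eq hq hp).mp hd
    subst this
    have : H = AddSubgroup.zmultiples (q : ℤ) := le_antisymm hle2 hle
    rwa [← this]
  have hinf : P.Infinite := by
    have : P = (fun p : ℕ => AddSubgroup.zmultiples ((p : ℕ) : ℤ)) '' {p | p.Prime} := by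
      ext H
      constructor
      · rintro ⟨p, hp, rfl⟩; exact ⟨p, hp, rfl⟩
      · rintro ⟨p, hp, rfl⟩; exact ⟨p, hp, rfl⟩
    rw [this]
    exact (Nat.infinite_setOf_prime.image primes_zmul_injOn)
  exact hinf (Set.Finite.subset s.finite_toSet hsub)
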